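/- Define θ^ε_{k,j} as in the model: for k₃ = 0, N ≤ |k_H| ≤ 2N, θ^ε_{k,1} = ±i/(C_{1,H}|k|) (sign depending on the half-lattice), θ^ε_{k,2} = 1/(C_{2,H}|k|^{γ/2}), with a_{k,1} = k^⊥/|k| ⊕ 0 and a_{k,2} = e₃. Let ∂Q̄_ρ(0) be the gradient at 0 of the off-diagonal covariance Q̄_ρ(x) = 2ρ ∑_{k₃=0} (θ_{k,1}θ_{k,2}^* a_{k,1}⊗a_{k,2} + θ_{k,2}θ_{k,1}^* a_{k,2}⊗a_{k,1}) e^{ik·x}. Then the Hilbert–Schmidt norm bound ‖∇Q̄_ρ(0)‖_{HS} ≤ 2√2 |ρ| ζ^N_{H,γ/2} N^{2−γ/2}/(C_{1,H}C_{2,H}) holds, where ζ^N_{H,γ/2} = N^{γ/2−2} ∑_{N ≤ |k_H| ≤ 2N} |k_H|^{−γ/2}. -/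

import Mathlib

open MeasureTheory Real

/-- Euclidean norm of a point of `ℤ²`. -/
noncomputable def latNorm (k : ℤ × ℤ) : ℝ :=
  Real.sqrt ((k.1 : ℝ) ^ 2 + (k.2 : ℝ) ^ 2)

/-- Sign `±1` selecting the half-lattice `Γ₊` for horizontal modes (`k₃ = 0`). -/
noncomputable def latSgn (k : ℤ × ℤ) : ℝ :=
  if 0 < k.2 ∨ (k.2 = 0 ∧ 0 < k.1) then 1 else -1

/-- `θ^ε_{k,1} = ± i/(C_{1,H}|k|)`. -/
noncomputable def th1 (C1 : ℝ) (k : ℤ × ℤ) : ℂ :=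
  ((latSgn k : ℝ) : ℂ) * Complex.I / ((C1 : ℂ) * ((latNorm k : ℝ) : ℂ))

/-- `θ^ε_{k,2} = 1/(C_{2,H}|k|^{γ/2})`. -/
noncomputable def th2 (C2 γ : ℝ) (k : ℤ × ℤ) : ℂ :=
  ((1 / (C2 * latNorm k ^ (γ / 2)) : ℝ) : ℂ)

/-- `a_{k,1} = (k^⊥/|k|, 0)`. -/
noncomputable def avec1 (k : ℤ × ℤ) : Fin 3 → ℝ :=
  ![-(k.2 : ℝ) / latNorm k, (k.1 : ℝ) / latNorm k, 0]

/-- `a_{k,2} = e₃`. -/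
def avec2 : Fin 3 → ℝ := ![0, 0, 1]

/-- The off-diagonal covariance
`Q̄_ρ(z) = 2ρ ∑_{k₃=0, N ≤ |k_H| ≤ 2N} (θ₁θ₂* a₁⊗a₂ + θ₂θ₁* a₂⊗a₁) e^{ik·z}`
(matrix entry `(p,q)`). -/
noncomputable def Qrho (ρ C1 C2 γ : ℝ) (N : ℕ) (z : Fin 3 → ℝ) (p q : Fin 3) : ℂ :=
  2 * (ρ : ℂ) *
    ∑' k : ℤ × ℤ,
      if k ≠ 0 ∧ (N : ℝ) ≤ latNorm k ∧ latNorm k ≤ 2 * N then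
        (th1 C1 k * starRingEnd ℂ (th2 C2 γ k) * ((avec1 k p : ℝ) : ℂ) * ((avec2 q : ℝ) : ℂ) +
            th2 C2 γ k * starRingEnd ℂ (th1 C1 k) * ((avec2 p : ℝ) : ℂ) * ((avec1 k q : ℝ) : ℂ)) *
          Complex.exp (Complex.I * (((k.1 : ℝ) * z 0 + (k.2 : ℝ) * z 1 : ℝ) : ℂ))
      else 0

/-- `ζ^N_{H,j} = N^{j-2} ∑_{N ≤ |k_H| ≤ 2N} |k_H|^{-j}`. -/
noncomputable def zetaHN (N : ℕ) (j : ℝ) : ℝ :=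
  (N : ℝ) ^ (j - 2) *
    ∑' k : ℤ × ℤ,
      if k ≠ 0 ∧ (N : ℝ) ≤ latNorm k ∧ latNorm k ≤ 2 * N then latNorm k ^ (-j) else 0

/-- aux: box -/
noncomputable def Sbox (N : ℕ) : Finset (ℤ × ℤ) :=
  Finset.Icc (-(2*N : ℤ), -(2*N : ℤ)) ((2*N : ℤ), (2*N : ℤ))

lemma mem_Sbox {N : ℕ} {k : ℤ × ℤ} (h : latNorm k ≤ 2 * N) : k ∈ Sbox N := by
  have h0 : (0:ℝ) ≤ (k.1:ℝ)^2 + (k.2:ℝ)^2 := by positivity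
  have hsq : (k.1:ℝ)^2 + (k.2:ℝ)^2 ≤ (2*N)^2 := by
    have hle : latNorm k ^ 2 ≤ (2*(N:ℝ))^2 := by
      apply pow_le_pow_left₀ (Real.sqrt_nonneg _) h
    rw [latNorm, Real.sq_sqrt h0] at hle
    exact hle
  have h1 : |(k.1:ℝ)| ≤ 2*N := by
    rw [abs_le]; constructor <;> nlinarith [sq_nonneg ((k.2:ℝ))]
  have h2 : |(k.2:ℝ)| ≤ 2*N := by
    rw [abs_le]; constructor <;> nlinarith [sq_nonneg ((k.1:ℝ))]
  rw [abs_le] at h1 h2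
  obtain ⟨⟨a1,b1⟩,⟨a2,b2⟩⟩ := And.intro h1 h2
  simp only [Sbox, Finset.mem_Icc, Prod.le_def]
  exact ⟨⟨by exact_mod_cast a1, by exact_mod_cast a2⟩,
    ⟨by exact_mod_cast b1, by exact_mod_cast b2⟩⟩

noncomputable def coefC (C1 C2 γ : ℝ) (k : ℤ × ℤ) (p q : Fin 3) : ℂ :=
  th1 C1 k * starRingEnd ℂ (th2 C2 γ k) * ((avec1 k p : ℝ) : ℂ) * ((avec2 q : ℝ) : ℂ) +
    th2 C2 γ k * starRingEnd ℂ (th1 C1 k) * ((avec2 p : ℝ) : ℂ) * ((avec1 k q : ℝ) : ℂ)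

noncomputable def ellk (k : ℤ × ℤ) : (Fin 3 → ℝ) →L[ℝ] ℝ :=
  (k.1 : ℝ) • ContinuousLinearMap.proj 0 + (k.2 : ℝ) • ContinuousLinearMap.proj 1

noncomputable def Dk (c : ℂ) (k : ℤ × ℤ) : (Fin 3 → ℝ) →L[ℝ] ℂ :=
  c • (Complex.I • (Complex.ofRealCLM.comp (ellk k)))

lemma Dk_apply (c : ℂ) (k : ℤ × ℤ) (v : Fin 3 → ℝ) :
    Dk c k v = c * (Complex.I * (((k.1 : ℝ) * v 0 + (k.2 : ℝ) * v 1 : ℝ) : ℂ)) := by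
  simp [Dk, ellk, smul_eq_mul]
  ring

lemma hasFDerivAt_term (c : ℂ) (k : ℤ × ℤ) :
    HasFDerivAt (fun z : Fin 3 → ℝ =>
        c * Complex.exp (Complex.I * (((k.1 : ℝ) * z 0 + (k.2 : ℝ) * z 1 : ℝ) : ℂ)))
      (Dk c k) 0 := by
  have h0 : HasFDerivAt (fun z : Fin 3 → ℝ => (((k.1 : ℝ) * z 0 + (k.2 : ℝ) * z 1 : ℝ) : ℂ))
      (Complex.ofRealCLM.comp (ellk k)) 0 := by
    have h := (Complex.ofRealCLM.comp (ellk k)).hasFDerivAt (x := (0 : Fin 3 → ℝ))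
    convert h using 1
    funext z; simp [ellk, smul_eq_mul]
  have h3 := ((h0.const_mul Complex.I).cexp).const_mul c
  refine h3.congr_fderiv ?_
  simp [Dk]

lemma fderiv_Qrho (ρ C1 C2 γ : ℝ) (N : ℕ) (p q : Fin 3) :
    fderiv ℝ (fun z => Qrho ρ C1 C2 γ N z p q) 0 =
      (2 * (ρ : ℂ)) • ∑ k ∈ Sbox N,
        Dk (if k ≠ 0 ∧ (N : ℝ) ≤ latNorm k ∧ latNorm k ≤ 2 * N then coefC C1 C2 γ k p q else 0)
          k := by
  have hfun : (fun z => Qrho ρ C1 C2 γ N z p q) = fun z : Fin 3 → ℝ =>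
      2 * (ρ : ℂ) * ∑ k ∈ Sbox N,
        (if k ≠ 0 ∧ (N : ℝ) ≤ latNorm k ∧ latNorm k ≤ 2 * N then coefC C1 C2 γ k p q else 0) *
          Complex.exp (Complex.I * (((k.1 : ℝ) * z 0 + (k.2 : ℝ) * z 1 : ℝ) : ℂ)) := by
    funext z
    unfold Qrho
    congr 1
    rw [tsum_eq_sum (s := Sbox N) (fun k hk => by
      rw [if_neg (fun hc => hk (mem_Sbox hc.2.2))])]
    exact Finset.sum_congr rfl fun k _ => by unfold coefC; split <;> simp
  rw [hfun]
  exact (((HasFDerivAt.fun_sum (fun k _ => hasFDerivAt_term _ k)).const_mul (2 * (ρ:ℂ)))).fderiv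

lemma norm_th1 {C1 : ℝ} (hC1 : 0 < C1) {k : ℤ × ℤ} (hk : 0 < latNorm k) :
    ‖th1 C1 k‖ = 1 / (C1 * latNorm k) := by
  have hs : |latSgn k| = 1 := by unfold latSgn; split <;> simp
  simp [th1, norm_div, norm_mul, Complex.norm_real, Real.norm_eq_abs, hs,
    abs_of_pos hC1, abs_of_pos hk]

lemma norm_th2 {C2 γ : ℝ} (hC2 : 0 < C2) {k : ℤ × ℤ} (hk : 0 < latNorm k) :
    ‖th2 C2 γ k‖ = 1 / (C2 * latNorm k ^ (γ / 2)) := by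
  have h : (0:ℝ) < C2 * latNorm k ^ (γ / 2) := by positivity
  rw [th2, Complex.norm_real, Real.norm_eq_abs, abs_of_pos (by positivity)]

lemma vecnorm {C1 C2 γ : ℝ} (hC1 : 0 < C1) (hC2 : 0 < C2) {k : ℤ × ℤ}
    (hk : 0 < latNorm k) :
    Real.sqrt (∑ p : Fin 3, ∑ q : Fin 3, ∑ n : Fin 3,
        ‖coefC C1 C2 γ k p q *
          (Complex.I * (((k.1 : ℝ) * (Pi.single n (1:ℝ) : Fin 3 → ℝ) 0 + (k.2 : ℝ) * (Pi.single n (1:ℝ) : Fin 3 → ℝ) 1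
            : ℝ) : ℂ))‖ ^ 2)
      = Real.sqrt 2 / (C1 * C2) * latNorm k ^ (-(γ / 2)) := by
  set r := latNorm k with hrdef
  have hr2 : r ^ 2 = (k.1:ℝ)^2 + (k.2:ℝ)^2 := Real.sq_sqrt (by positivity)
  have hin : ∀ c : ℂ, ∑ n : Fin 3,
      ‖c * (Complex.I * (((k.1 : ℝ) * (Pi.single n (1:ℝ) : Fin 3 → ℝ) 0 + (k.2 : ℝ) * (Pi.single n (1:ℝ) : Fin 3 → ℝ) 1
        : ℝ) : ℂ))‖ ^ 2 = ‖c‖^2 * ((k.1:ℝ)^2 + (k.2:ℝ)^2) := by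
    intro c
    rw [Fin.sum_univ_three]
    simp [Pi.single_apply, norm_mul, Complex.norm_real, Real.norm_eq_abs, sq_abs,
      mul_pow]
    ring
  have hone : ((k.2:ℝ)/r)^2 + ((k.1:ℝ)/r)^2 = 1 := by
    rw [div_pow, div_pow, ← add_div,
      show (k.2:ℝ)^2 + (k.1:ℝ)^2 = r^2 by linarith]
    field_simp
  have hpq : ∑ p : Fin 3, ∑ q : Fin 3, ‖coefC C1 C2 γ k p q‖ ^ 2
      = 2 * (‖th1 C1 k‖ * ‖th2 C2 γ k‖)^2 * (((k.2:ℝ)/r)^2 + ((k.1:ℝ)/r)^2) := by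
    simp [Fin.sum_univ_three, coefC, avec1, avec2, norm_mul, RCLike.norm_conj,
      Complex.norm_real, Real.norm_eq_abs, sq_abs, mul_pow, ← hrdef]
    simp only [div_pow, sq_abs]
    ring
  simp_rw [hin, ← Finset.sum_mul, hpq, hone, mul_one]
  rw [norm_th1 hC1 hk, norm_th2 hC2 hk, ← hr2]
  have hrp : (0:ℝ) < r ^ (γ/2) := Real.rpow_pos_of_pos hk _
  have h2 : (0:ℝ) ≤ 2 := by norm_num
  have key : 2 * (1 / (C1 * r) * (1 / (C2 * r ^ (γ/2))))^2 * r^2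
      = (Real.sqrt 2 / (C1 * C2) * r ^ (-(γ/2)))^2 := by
    have h22 : Real.sqrt 2 ^ 2 = 2 := Real.sq_sqrt h2
    rw [Real.rpow_neg hk.le]
    field_simp
    nlinarith [h22, sq_nonneg r, hrp, hk]
  rw [key, Real.sqrt_sq (by positivity)]

/-- Hilbert–Schmidt bound on the gradient of the off-diagonal covariance at `0`:
`‖∇Q̄_ρ(0)‖_{HS} ≤ 2√2 |ρ| ζ^N_{H,γ/2} N^{2−γ/2}/(C_{1,H}C_{2,H})`. -/
theorem stmt_15 (ρ C1 C2 γ : ℝ) (N : ℕ)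
    (hρ : |ρ| ≤ 1) (hC1 : 0 < C1) (hC2 : 0 < C2) (hγ : 4 ≤ γ) (hN : 1 ≤ N) :
    Real.sqrt (∑ p : Fin 3, ∑ q : Fin 3, ∑ n : Fin 3,
        ‖fderiv ℝ (fun z => Qrho ρ C1 C2 γ N z p q) 0 (Pi.single n 1)‖ ^ 2) ≤
      2 * Real.sqrt 2 * |ρ| * zetaHN N (γ / 2) * (N : ℝ) ^ (2 - γ / 2) / (C1 * C2) := by
  classical
  have hN1 : (1:ℝ) ≤ N := by exact_mod_cast hN
  have hN0 : (0:ℝ) < N := by linarith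
  set S := Sbox N with hS
  set G : ℤ × ℤ → (Fin 3 × Fin 3 × Fin 3 → ℂ) := fun k m =>
    (if k ≠ 0 ∧ (N : ℝ) ≤ latNorm k ∧ latNorm k ≤ 2 * N then coefC C1 C2 γ k m.1 m.2.1 else 0) *
      (Complex.I * (((k.1 : ℝ) * (Pi.single m.2.2 (1:ℝ) : Fin 3 → ℝ) 0
        + (k.2 : ℝ) * (Pi.single m.2.2 (1:ℝ) : Fin 3 → ℝ) 1 : ℝ) : ℂ)) with hG
  set e := WithLp.linearEquiv 2 ℂ (Fin 3 × Fin 3 × Fin 3 → ℂ) with he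
  set F : ℤ × ℤ → EuclideanSpace ℂ (Fin 3 × Fin 3 × Fin 3) := fun k => e.symm (G k) with hF
  set W : EuclideanSpace ℂ (Fin 3 × Fin 3 × Fin 3) :=
    e.symm fun m => fderiv ℝ (fun z => Qrho ρ C1 C2 γ N z m.1 m.2.1) 0 (Pi.single m.2.2 1)
    with hWdef
  have key : ∀ m : Fin 3 × Fin 3 × Fin 3,
      fderiv ℝ (fun z => Qrho ρ C1 C2 γ N z m.1 m.2.1) 0 (Pi.single m.2.2 1)
        = 2 * (ρ:ℂ) * ∑ k ∈ S, G k m := by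
    intro m
    rw [fderiv_Qrho, ContinuousLinearMap.smul_apply, ContinuousLinearMap.sum_apply,
      smul_eq_mul]
    congr 1
  have hW : W = (2 * (ρ:ℂ)) • ∑ k ∈ S, F k := by
    apply e.injective
    rw [LinearEquiv.apply_symm_apply, _root_.map_smul, map_sum]
    funext m
    simp only [Pi.smul_apply, smul_eq_mul, Finset.sum_apply, hF,
      LinearEquiv.apply_symm_apply]
    exact key m
  have hLHS : Real.sqrt (∑ p : Fin 3, ∑ q : Fin 3, ∑ n : Fin 3,
      ‖fderiv ℝ (fun z => Qrho ρ C1 C2 γ N z p q) 0 (Pi.single n 1)‖ ^ 2) = ‖W‖ := by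
    rw [EuclideanSpace.norm_eq]
    congr 1
    simp only [Fintype.sum_prod_type]
    rfl
  have hnc : ‖(2 * (ρ:ℂ))‖ = 2 * |ρ| := by
    rw [norm_mul, Complex.norm_real]
    simp [Real.norm_eq_abs]
  have hFk : ∀ k ∈ S, ‖F k‖ ≤ Real.sqrt 2 / (C1*C2) *
      (if k ≠ 0 ∧ (N : ℝ) ≤ latNorm k ∧ latNorm k ≤ 2 * N
        then latNorm k ^ (-(γ/2)) else 0) := by
    intro k _
    by_cases hc : k ≠ 0 ∧ (N : ℝ) ≤ latNorm k ∧ latNorm k ≤ 2 * N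
    · have hk : 0 < latNorm k := lt_of_lt_of_le hN0 hc.2.1
      rw [if_pos hc]
      have hGk : G k = fun m : Fin 3 × Fin 3 × Fin 3 => coefC C1 C2 γ k m.1 m.2.1 *
          (Complex.I * (((k.1 : ℝ) * (Pi.single m.2.2 (1:ℝ) : Fin 3 → ℝ) 0
            + (k.2 : ℝ) * (Pi.single m.2.2 (1:ℝ) : Fin 3 → ℝ) 1 : ℝ) : ℂ)) := by
        funext m
        simp only [hG, if_pos hc]
      have hnf : ‖F k‖ = Real.sqrt (∑ p : Fin 3, ∑ q : Fin 3, ∑ n : Fin 3,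
          ‖coefC C1 C2 γ k p q *
            (Complex.I * (((k.1 : ℝ) * (Pi.single n (1:ℝ) : Fin 3 → ℝ) 0
              + (k.2 : ℝ) * (Pi.single n (1:ℝ) : Fin 3 → ℝ) 1 : ℝ) : ℂ))‖ ^ 2) := by
        rw [hF]
        beta_reduce
        rw [hGk, EuclideanSpace.norm_eq]
        congr 1
        simp only [Fintype.sum_prod_type]
        rfl
      rw [hnf, vecnorm hC1 hC2 hk]
    · rw [if_neg hc]
      have hF0 : F k = 0 := by
        rw [hF]
        have : G k = 0 := by funext m; rw [hG]; simp [if_neg hc]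
        simp [this]
      rw [hF0, norm_zero, mul_zero]
  have hT : zetaHN N (γ/2) * (N:ℝ) ^ (2 - γ/2)
      = ∑ k ∈ S, (if k ≠ 0 ∧ (N : ℝ) ≤ latNorm k ∧ latNorm k ≤ 2 * N
          then latNorm k ^ (-(γ/2)) else 0) := by
    unfold zetaHN
    rw [tsum_eq_sum (s := S) (fun k hk => by
      rw [if_neg (fun hc => hk (mem_Sbox hc.2.2))])]
    rw [mul_comm ((N:ℝ)^(γ/2-2)) _, mul_assoc, ← Real.rpow_add hN0]
    norm_num
  calc Real.sqrt (∑ p : Fin 3, ∑ q : Fin 3, ∑ n : Fin 3,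
        ‖fderiv ℝ (fun z => Qrho ρ C1 C2 γ N z p q) 0 (Pi.single n 1)‖ ^ 2)
      = ‖W‖ := hLHS
    _ = 2 * |ρ| * ‖∑ k ∈ S, F k‖ := by rw [hW, norm_smul, hnc]
    _ ≤ 2 * |ρ| * ∑ k ∈ S, ‖F k‖ := by
        apply mul_le_mul_of_nonneg_left (norm_sum_le _ _) (by positivity)
    _ ≤ 2 * |ρ| * ∑ k ∈ S, (Real.sqrt 2 / (C1*C2) *
        (if k ≠ 0 ∧ (N : ℝ) ≤ latNorm k ∧ latNorm k ≤ 2 * N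
          then latNorm k ^ (-(γ/2)) else 0)) := by
        apply mul_le_mul_of_nonneg_left (Finset.sum_le_sum hFk) (by positivity)
    _ = 2 * Real.sqrt 2 * |ρ| * zetaHN N (γ / 2) * (N : ℝ) ^ (2 - γ / 2) / (C1 * C2) := by
        rw [← Finset.mul_sum, ← hT]
        ring
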